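/- Let X be a nonnegative random variable with cumulative distribution function F and finite second moment E[X²] = ∫₀^∞ 2x(1 − F(x)) dx. Then the weighted cumulative entropy of X satisfies 𝓒𝓔^w(X) = (1/2)E[X²] − (1/2) Σ_{n=1}^∞ μ^{(2)}_{1:n+1}/(n(n+1)); equivalently 𝓒𝓔^w(X) + (1/2) Σ_{n=1}^∞ μ^{(2)}_{1:n+1}/(n(n+1)) = (1/2)E[X²], where all terms are nonnegative. -/

import Mathlib

open MeasureTheory ProbabilityTheory Set
open scoped ENNReal

set_option maxHeartbeats 1000000

open Finset in
private lemma key_hasSum {q : ℝ} (h0 : 0 ≤ q) (h1 : q ≤ 1) :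
    HasSum (fun n : ℕ => q ^ (n + 2) / (((n : ℝ) + 1) * ((n : ℝ) + 2)))
      (q + (1 - q) * Real.log (1 - q)) := by
  rcases eq_or_lt_of_le h1 with rfl | h1
  · simp only [one_pow, sub_self, Real.log_zero, mul_zero, add_zero]
    have hg : Summable (fun n : ℕ => 1 / ((n : ℝ) + 1) ^ 2) := by
      have := (summable_nat_add_iff (f := fun n : ℕ => 1 / ((n : ℝ)) ^ 2) 1).mpr
        (Real.summable_one_div_nat_pow.mpr one_lt_two)
      simpa using this
    have hle : ∀ n : ℕ, (1 : ℝ) / (((n : ℝ) + 1) * ((n : ℝ) + 2)) ≤ 1 / ((n : ℝ) + 1) ^ 2 := by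
      intro n
      apply div_le_div_of_nonneg_left one_pos.le (by positivity)
      nlinarith [Nat.cast_nonneg (α := ℝ) n]
    have hnn : ∀ n : ℕ, (0 : ℝ) ≤ 1 / (((n : ℝ) + 1) * ((n : ℝ) + 2)) := fun n => by positivity
    have hsum : Summable (fun n : ℕ => (1 : ℝ) / (((n : ℝ) + 1) * ((n : ℝ) + 2))) :=
      Summable.of_nonneg_of_le hnn hle hg
    rw [hsum.hasSum_iff_tendsto_nat]
    have hps : ∀ n : ℕ, ∑ i ∈ range n, (1 : ℝ) / (((i : ℝ) + 1) * ((i : ℝ) + 2))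
        = 1 - 1 / ((n : ℝ) + 1) := by
      intro n
      induction n with
      | zero => simp
      | succ n ih =>
        rw [Finset.sum_range_succ, ih]
        push_cast
        have h1 : (n : ℝ) + 1 ≠ 0 := by positivity
        have h2 : (n : ℝ) + 2 ≠ 0 := by positivity
        field_simp
        ring
    simp only [hps]
    have : Filter.Tendsto (fun n : ℕ => 1 / ((n : ℝ) + 1)) Filter.atTop (nhds 0) :=
      tendsto_one_div_add_atTop_nhds_zero_nat
    simpa using (tendsto_const_nhds (x := (1:ℝ))).sub this
  · have habs : |q| < 1 := abs_lt.mpr ⟨by linarith, h1⟩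
    have hlog := Real.hasSum_pow_div_log_of_abs_lt_one habs
    have h2 : HasSum (fun n : ℕ => q ^ (n + 1 + 1) / ((n : ℝ) + 1 + 1))
        (-Real.log (1 - q) - q) := by
      have := (hasSum_nat_add_iff' (f := fun n : ℕ => q ^ (n + 1) / ((n : ℝ) + 1)) 1).mpr hlog
      simpa using this
    have h3 := hlog.mul_left q
    have h4 := h3.sub h2
    have heq : (fun n : ℕ => q * (q ^ (n + 1) / ((n : ℝ) + 1)) - q ^ (n + 1 + 1) / ((n : ℝ) + 1 + 1))
        = fun n : ℕ => q ^ (n + 2) / (((n : ℝ) + 1) * ((n : ℝ) + 2)) := by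
      funext n
      have h1 : (n : ℝ) + 1 ≠ 0 := by positivity
      have h2 : (n : ℝ) + 2 ≠ 0 := by positivity
      rw [show n + 1 + 1 = n + 2 from rfl, pow_succ]
      field_simp
      ring
    rw [heq] at h4
    convert h4 using 1
    case e'_3 => rfl
    case e'_6 => ring
lemma pointwise_eq {x p : ℝ} (hx : 0 < x) (hp0 : 0 ≤ p) (hp1 : p ≤ 1) :
    ENNReal.ofReal (-(x * p * Real.log p))
      + 2⁻¹ * ∑' n : ℕ, (((n : ℝ≥0∞) + 1) * ((n : ℝ≥0∞) + 2))⁻¹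
          * ENNReal.ofReal (2 * x * (1 - p) ^ (n + 2))
    = 2⁻¹ * ENNReal.ofReal (2 * x * (1 - p)) := by
  set q := 1 - p with hqdef
  have hq0 : 0 ≤ q := by simp [hqdef]; linarith
  have hq1 : q ≤ 1 := by simp [hqdef]; linarith
  have hpq : 1 - q = p := by simp [hqdef]
  have hS := key_hasSum hq0 hq1
  rw [hpq] at hS
  have hSnn : 0 ≤ q + p * Real.log p :=
    hS.nonneg fun n => by positivity
  have hterm : ∀ n : ℕ, (((n : ℝ≥0∞) + 1) * ((n : ℝ≥0∞) + 2))⁻¹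
      * ENNReal.ofReal (2 * x * q ^ (n + 2))
      = ENNReal.ofReal (2 * x * (q ^ (n + 2) / (((n : ℝ) + 1) * ((n : ℝ) + 2)))) := by
    intro n
    have hpos : (0:ℝ) < ((n : ℝ) + 1) * ((n : ℝ) + 2) := by positivity
    have hcast : ((n : ℝ≥0∞) + 1) * ((n : ℝ≥0∞) + 2)
        = ENNReal.ofReal (((n : ℝ) + 1) * ((n : ℝ) + 2)) := by
      rw [ENNReal.ofReal_mul (by positivity)]
      congr 1
      · rw [ENNReal.ofReal_add (by positivity) zero_le_one]
        simp
      · rw [ENNReal.ofReal_add (by positivity) (by norm_num)]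
        simp
    rw [hcast, ← ENNReal.ofReal_inv_of_pos hpos,
      ← ENNReal.ofReal_mul (by positivity)]
    congr 1
    field_simp
  have hS2 := hS.mul_left (2 * x)
  have htsum : ∑' n : ℕ, ENNReal.ofReal
        (2 * x * (q ^ (n + 2) / (((n : ℝ) + 1) * ((n : ℝ) + 2))))
      = ENNReal.ofReal (2 * x * (q + p * Real.log p)) := by
    rw [← hS2.tsum_eq]
    exact (ENNReal.ofReal_tsum_of_nonneg (fun n => by positivity) hS2.summable).symm
  simp only [hterm, htsum]
  have h2 : ∀ t : ℝ, 0 ≤ t → (2:ℝ≥0∞)⁻¹ * ENNReal.ofReal (2 * x * t)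
      = ENNReal.ofReal (x * t) := by
    intro t ht
    rw [show 2 * x * t = 2 * (x * t) by ring, ENNReal.ofReal_mul (by norm_num),
      show ENNReal.ofReal 2 = 2 by simp [ENNReal.ofReal_ofNat], ← mul_assoc,
      ENNReal.inv_mul_cancel (by norm_num) (by norm_num), one_mul]
  rw [h2 _ hSnn, h2 _ hq0]
  have hlog : Real.log p ≤ 0 := Real.log_nonpos hp0 hp1
  have hA : 0 ≤ -(x * p * Real.log p) := by
    rw [show -(x * p * Real.log p) = x * p * (-Real.log p) by ring]
    exact mul_nonneg (mul_nonneg hx.le hp0) (neg_nonneg.mpr hlog)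
  rw [← ENNReal.ofReal_add hA (mul_nonneg hx.le hSnn)]
  congr 1
  ring

/-- For a nonnegative random variable with cdf `F = cdf μ` and finite second
moment `E[X²] = ∫₀^∞ 2x (1 - F x) dx`, the weighted cumulative entropy
`𝓒𝓔^w(X) = ∫₀^∞ -x (F x) log (F x) dx` satisfies
`𝓒𝓔^w(X) + (1/2) ∑_{n=1}^∞ μ^{(2)}_{1:n+1} / (n (n+1)) = (1/2) E[X²]`, all terms being
nonnegative (values in `[0, ∞]`), where `μ^{(2)}_{1:m} = ∫₀^∞ 2x (1 - F x)^m dx` is the second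
moment of the smallest order statistic. -/
theorem wce_add_half_tsum_min_order_stats_eq_half_second_moment
    (μ : Measure ℝ) [IsProbabilityMeasure μ] (hnonneg : μ (Set.Iio 0) = 0)
    (hmom2 : ∫⁻ x in Set.Ioi (0 : ℝ), ENNReal.ofReal (2 * x * (1 - cdf μ x)) ≠ ⊤) :
    (∫⁻ x in Set.Ioi (0 : ℝ),
        ENNReal.ofReal (-(x * cdf μ x * Real.log (cdf μ x))))
      + (∑' n : ℕ,
          (∫⁻ x in Set.Ioi (0 : ℝ), ENNReal.ofReal (2 * x * (1 - cdf μ x) ^ (n + 2)))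
            / (((n : ℝ≥0∞) + 1) * ((n : ℝ≥0∞) + 2))) / 2
    = (∫⁻ x in Set.Ioi (0 : ℝ), ENNReal.ofReal (2 * x * (1 - cdf μ x))) / 2 := by
  have hFm : Measurable fun x : ℝ => cdf μ x := (cdf μ).mono.measurable
  have hmeas : ∀ n : ℕ, Measurable fun x : ℝ =>
      (((n : ℝ≥0∞) + 1) * ((n : ℝ≥0∞) + 2))⁻¹
        * ENNReal.ofReal (2 * x * (1 - cdf μ x) ^ (n + 2)) := by
    intro n
    exact measurable_const.mul (((measurable_const.mul measurable_id).mul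
      ((measurable_const.sub hFm).pow_const _)).ennreal_ofReal)
  have hdiv : ∀ n : ℕ, (∫⁻ x in Set.Ioi (0:ℝ),
        ENNReal.ofReal (2 * x * (1 - cdf μ x) ^ (n + 2)))
        / (((n : ℝ≥0∞) + 1) * ((n : ℝ≥0∞) + 2))
      = ∫⁻ x in Set.Ioi (0:ℝ), (((n : ℝ≥0∞) + 1) * ((n : ℝ≥0∞) + 2))⁻¹
          * ENNReal.ofReal (2 * x * (1 - cdf μ x) ^ (n + 2)) := by
    intro n
    rw [ENNReal.div_eq_inv_mul, ← lintegral_const_mul' _ _ (by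
      rw [Ne, ENNReal.inv_eq_top]
      exact mul_ne_zero (by simp) (by simp))]
  simp only [hdiv]
  rw [← lintegral_tsum (fun n => (hmeas n).aemeasurable)]
  rw [ENNReal.div_eq_inv_mul, ENNReal.div_eq_inv_mul,
    ← lintegral_const_mul' _ _ (by norm_num), ← lintegral_const_mul' _ _ (by norm_num),
    ← lintegral_add_left']
  · exact setLIntegral_congr_fun measurableSet_Ioi (fun x hx =>
      pointwise_eq hx (cdf_nonneg μ x) (cdf_le_one μ x))
  · exact (((measurable_id.mul hFm).mul (hFm.log)).neg.ennreal_ofReal).aemeasurable
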